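/- arXiv:1310.2285 — 3 statements merged into one kernel-verified Lean document; each statement's English description precedes it below -/
import Mathlib

section
/- (Bootstrap lemma for the energy–dissipation inequality.) For every c > 0, C₀ > 0 and T > 0 there exist ε₀ > 0 and M > 0, depending only on c, C₀ and T, such that for every ε ∈ (0, ε₀], every differentiable function ℰ : [0, T] → [0, ∞) with ℰ(0) ≤ C₀, and every continuous function 𝒟 : [0, T] → [0, ∞) satisfying ℰ'(t) + (1/2)𝒟(t) ≤ c ℰ(t) + c ε ℰ(t)^{3/2} + c ε ℰ(t)² + c ε⁶ ℰ(t)³ + c (ε + ε² ℰ(t)^{1/2} + ε⁴ ℰ(t)^{3/2}) 𝒟(t) for all t ∈ [0, T], one has ℰ(t) ≤ M for all t ∈ [0, T]. -/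
open Real Set Topology Filter

set_option maxHeartbeats 1000000 in
/-- Bootstrap lemma for the energy–dissipation inequality closing the
one-dimensional sharp interface theorem. -/
theorem energy_dissipation_bootstrap (c C₀ T : ℝ) (hc : 0 < c) (hC₀ : 0 < C₀)
    (hT : 0 < T) :
    ∃ ε₀ M : ℝ, 0 < ε₀ ∧ 0 < M ∧
      ∀ ε : ℝ, 0 < ε → ε ≤ ε₀ →
        ∀ E E' D : ℝ → ℝ,
          (∀ t ∈ Icc 0 T, HasDerivWithinAt E (E' t) (Icc 0 T) t) →
          (∀ t ∈ Icc 0 T, 0 ≤ E t) →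
          E 0 ≤ C₀ →
          ContinuousOn D (Icc 0 T) →
          (∀ t ∈ Icc 0 T, 0 ≤ D t) →
          (∀ t ∈ Icc 0 T,
            E' t + (1/2) * D t ≤
              c * E t + c * ε * (E t) ^ ((3:ℝ)/2) + c * ε * (E t)^2 + c * ε^6 * (E t)^3
                + c * (ε + ε^2 * (E t) ^ ((1:ℝ)/2) + ε^4 * (E t) ^ ((3:ℝ)/2)) * D t) →
          ∀ t ∈ Icc 0 T, E t ≤ M := by
  have hexp : (1:ℝ) ≤ Real.exp (c * T) := Real.one_le_exp (by positivity)
  set B : ℝ := (C₀ + 1) * Real.exp (c * T) with hBdef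
  have hB : 0 < B := by positivity
  have hC₀B : C₀ ≤ B := by nlinarith
  set M : ℝ := B + 1 with hMdef
  clear_value B M
  have hM : 0 < M := by linarith
  have hM32 : 0 < M ^ ((3:ℝ)/2) := Real.rpow_pos_of_pos hM _
  have hM12 : 0 < M ^ ((1:ℝ)/2) := Real.rpow_pos_of_pos hM _
  refine ⟨min 1 (min ((M ^ ((3:ℝ)/2) + M^2 + M^3)⁻¹)
      ((2*c*(1 + M ^ ((1:ℝ)/2) + M ^ ((3:ℝ)/2)))⁻¹)), M, ?_, hM, ?_⟩
  · have h1 : 0 < (M ^ ((3:ℝ)/2) + M^2 + M^3)⁻¹ := by positivity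
    have h2 : 0 < (2*c*(1 + M ^ ((1:ℝ)/2) + M ^ ((3:ℝ)/2)))⁻¹ := by positivity
    simp only [lt_min_iff]
    exact ⟨one_pos, h1, h2⟩
  intro ε hε hεle E E' D hE hEnn hE0 hD hDnn hineq
  have hε1 : ε ≤ 1 := hεle.trans (min_le_left _ _)
  have hε2 : ε ≤ (M ^ ((3:ℝ)/2) + M^2 + M^3)⁻¹ :=
    hεle.trans ((min_le_right _ _).trans (min_le_left _ _))
  have hε3 : ε ≤ (2*c*(1 + M ^ ((1:ℝ)/2) + M ^ ((3:ℝ)/2)))⁻¹ :=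
    hεle.trans ((min_le_right _ _).trans (min_le_right _ _))
  have hS1 : 0 < M ^ ((3:ℝ)/2) + M^2 + M^3 := by positivity
  have hS2 : 0 < 2*c*(1 + M ^ ((1:ℝ)/2) + M ^ ((3:ℝ)/2)) := by positivity
  have hεS1 : ε * (M ^ ((3:ℝ)/2) + M^2 + M^3) ≤ 1 := by
    calc ε * (M ^ ((3:ℝ)/2) + M^2 + M^3)
        ≤ (M ^ ((3:ℝ)/2) + M^2 + M^3)⁻¹ * (M ^ ((3:ℝ)/2) + M^2 + M^3) :=
          mul_le_mul_of_nonneg_right hε2 hS1.le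
      _ = 1 := inv_mul_cancel₀ hS1.ne'
  have hεS2 : ε * (2*c*(1 + M ^ ((1:ℝ)/2) + M ^ ((3:ℝ)/2))) ≤ 1 := by
    calc ε * (2*c*(1 + M ^ ((1:ℝ)/2) + M ^ ((3:ℝ)/2)))
        ≤ (2*c*(1 + M ^ ((1:ℝ)/2) + M ^ ((3:ℝ)/2)))⁻¹ *
            (2*c*(1 + M ^ ((1:ℝ)/2) + M ^ ((3:ℝ)/2))) :=
          mul_le_mul_of_nonneg_right hε3 hS2.le
      _ = 1 := inv_mul_cancel₀ hS2.ne'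
  have hε6 : ε^6 ≤ ε := by
    have := pow_le_pow_of_le_one hε.le hε1 (show 1 ≤ 6 by norm_num)
    simpa using this
  have hε2' : ε^2 ≤ ε := by
    have := pow_le_pow_of_le_one hε.le hε1 (show 1 ≤ 2 by norm_num)
    simpa using this
  have hε4 : ε^4 ≤ ε := by
    have := pow_le_pow_of_le_one hε.le hε1 (show 1 ≤ 4 by norm_num)
    simpa using this
  -- Key pointwise estimate: where E ≤ M, we have E' ≤ c E + c
  have hkey : ∀ t ∈ Icc 0 T, E t ≤ M → E' t ≤ c * E t + c := by
    intro t ht htM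
    have hx0 : 0 ≤ E t := hEnn t ht
    have hr32 : E t ^ ((3:ℝ)/2) ≤ M ^ ((3:ℝ)/2) := Real.rpow_le_rpow hx0 htM (by norm_num)
    have hr12 : E t ^ ((1:ℝ)/2) ≤ M ^ ((1:ℝ)/2) := Real.rpow_le_rpow hx0 htM (by norm_num)
    have h2 : E t ^ 2 ≤ M ^ 2 := pow_le_pow_left₀ hx0 htM 2
    have h3 : E t ^ 3 ≤ M ^ 3 := pow_le_pow_left₀ hx0 htM 3
    have hx32 : 0 ≤ E t ^ ((3:ℝ)/2) := Real.rpow_nonneg hx0 _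
    have hx12 : 0 ≤ E t ^ ((1:ℝ)/2) := Real.rpow_nonneg hx0 _
    have hA : c * ε * E t ^ ((3:ℝ)/2) + c * ε * E t ^ 2 + c * ε^6 * E t ^ 3 ≤ c := by
      have f1 : c * ε * E t ^ ((3:ℝ)/2) ≤ c * ε * M ^ ((3:ℝ)/2) :=
        mul_le_mul_of_nonneg_left hr32 (by positivity)
      have f2 : c * ε * E t ^ 2 ≤ c * ε * M ^ 2 :=
        mul_le_mul_of_nonneg_left h2 (by positivity)
      have f3 : c * ε^6 * E t ^ 3 ≤ c * ε^6 * M ^ 3 :=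
        mul_le_mul_of_nonneg_left h3 (by positivity)
      have f4 : (c * M^3) * ε^6 ≤ (c * M^3) * ε :=
        mul_le_mul_of_nonneg_left hε6 (by positivity)
      have f5 : c * (ε * (M ^ ((3:ℝ)/2) + M^2 + M^3)) ≤ c * 1 :=
        mul_le_mul_of_nonneg_left hεS1 hc.le
      linarith [f1, f2, f3, f4, f5]
    have hB' : c * (ε + ε^2 * E t ^ ((1:ℝ)/2) + ε^4 * E t ^ ((3:ℝ)/2)) ≤ 1/2 := by
      have k1 : ε^2 * E t ^ ((1:ℝ)/2) ≤ ε * M ^ ((1:ℝ)/2) :=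
        mul_le_mul hε2' hr12 hx12 hε.le
      have k2 : ε^4 * E t ^ ((3:ℝ)/2) ≤ ε * M ^ ((3:ℝ)/2) :=
        mul_le_mul hε4 hr32 hx32 hε.le
      have hinner : ε + ε^2 * E t ^ ((1:ℝ)/2) + ε^4 * E t ^ ((3:ℝ)/2)
          ≤ ε * (1 + M ^ ((1:ℝ)/2) + M ^ ((3:ℝ)/2)) := by linarith [k1, k2]
      have := mul_le_mul_of_nonneg_left hinner hc.le
      linarith [this, hεS2]
    have hd := hineq t ht
    have hDt := hDnn t ht
    have hmul : c * (ε + ε^2 * E t ^ ((1:ℝ)/2) + ε^4 * E t ^ ((3:ℝ)/2)) * D t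
        ≤ (1/2) * D t := mul_le_mul_of_nonneg_right hB' hDt
    linarith
  have hEc : ContinuousOn E (Icc 0 T) := fun t ht => (hE t ht).continuousWithinAt
  -- Grönwall application on [0, t₁] whenever E ≤ M there
  have hgron : ∀ t₁ ∈ Icc 0 T, (∀ s ∈ Icc 0 t₁, E s ≤ M) → ∀ s ∈ Icc 0 t₁, E s ≤ B := by
    intro t₁ ht₁ hMbd
    have hsub : Icc (0:ℝ) t₁ ⊆ Icc 0 T := Icc_subset_Icc le_rfl ht₁.2
    have hgb := le_gronwallBound_of_liminf_deriv_right_le (f := E) (f' := E')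
      (δ := C₀) (K := c) (ε := c) (a := 0) (b := t₁) (hEc.mono hsub) ?_ hE0 ?_
    · intro s hs
      refine (hgb s hs).trans ?_
      have hs0 : 0 ≤ s := hs.1
      have hsT : s ≤ T := hs.2.trans ht₁.2
      have he : Real.exp (c * (s - 0)) ≤ Real.exp (c * T) :=
        Real.exp_le_exp.mpr (by nlinarith)
      have he1 : 1 ≤ Real.exp (c * (s - 0)) := Real.one_le_exp (by nlinarith)
      rw [gronwallBound_of_K_ne_0 hc.ne']
      simp only [div_self hc.ne']
      nlinarith [he, he1, hC₀.le, hBdef]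
    · -- liminf / right slope condition
      intro x hx r hr
      have hxT : x < T := lt_of_lt_of_le hx.2 ht₁.2
      have hxmem : x ∈ Icc 0 T := ⟨hx.1, hxT.le⟩
      have hmem : Icc 0 T \ {x} ∈ 𝓝[>] x := by
        have h1 : Ioc x T ∈ 𝓝[>] x := Ioc_mem_nhdsGT_of_mem ⟨le_rfl, hxT⟩
        filter_upwards [h1] with z hz
        exact ⟨⟨hx.1.trans hz.1.le, hz.2⟩, (ne_of_gt hz.1)⟩
      have htend : Filter.Tendsto (slope E x) (𝓝[>] x) (𝓝 (E' x)) :=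
        ((hasDerivWithinAt_iff_tendsto_slope.mp (hE x hxmem))).mono_left
          (nhdsWithin_le_of_mem hmem)
      refine ((htend.eventually_lt_const hr).frequently).mono fun z hz => ?_
      rw [slope_def_field] at hz
      rwa [div_eq_inv_mul] at hz
    · intro x hx
      exact hkey x ⟨hx.1, hx.2.le.trans ht₁.2⟩ (hMbd x ⟨hx.1, hx.2.le⟩)
  -- Bootstrap via sSup
  set S : Set ℝ := {t | t ∈ Icc 0 T ∧ ∀ s ∈ Icc 0 t, E s ≤ B} with hSdef
  have h0S : (0:ℝ) ∈ S := by
    refine ⟨⟨le_rfl, hT.le⟩, fun s hs => ?_⟩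
    have : s = 0 := le_antisymm hs.2 hs.1
    rw [this]; exact hE0.trans hC₀B
  have hSne : S.Nonempty := ⟨0, h0S⟩
  have hSbdd : BddAbove S := ⟨T, fun t ht => ht.1.2⟩
  set t₀ := sSup S with ht₀def
  have ht₀mem : t₀ ∈ Icc 0 T :=
    ⟨le_csSup hSbdd h0S, csSup_le hSne fun t ht => ht.1.2⟩
  have hlt : ∀ s, 0 ≤ s → s < t₀ → E s ≤ B := by
    intro s hs0 hst
    obtain ⟨t, htS, hst'⟩ := exists_lt_of_lt_csSup hSne hst
    exact htS.2 s ⟨hs0, hst'.le⟩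
  have hEt₀ : E t₀ ≤ B := by
    rcases eq_or_lt_of_le ht₀mem.1 with h | h
    · rw [← h]; exact hE0.trans hC₀B
    · have hsub : Ico (0:ℝ) t₀ ⊆ Icc 0 T := fun z hz => ⟨hz.1, hz.2.le.trans ht₀mem.2⟩
      have hc1 : ContinuousWithinAt E (Ico 0 t₀) t₀ := (hEc t₀ ht₀mem).mono hsub
      have heq : 𝓝[Ico (0:ℝ) t₀] t₀ = 𝓝[<] t₀ := nhdsWithin_Ico_eq_nhdsLT h
      have hne : (𝓝[Ico (0:ℝ) t₀] t₀).NeBot := by rw [heq]; infer_instance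
      refine le_of_tendsto hc1 ?_
      filter_upwards [self_mem_nhdsWithin] with z hz using hlt z hz.1 hz.2
  have ht₀S : t₀ ∈ S := by
    refine ⟨ht₀mem, fun s hs => ?_⟩
    rcases lt_or_eq_of_le hs.2 with h | h
    · exact hlt s hs.1 h
    · rw [h]; exact hEt₀
  have ht₀T : t₀ = T := by
    by_contra hne
    have hlt' : t₀ < T := lt_of_le_of_ne ht₀mem.2 hne
    have hcw : ContinuousWithinAt E (Icc 0 T) t₀ := hEc t₀ ht₀mem
    have hev : ∀ᶠ z in 𝓝[Icc 0 T] t₀, E z < M :=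
      hcw.eventually_lt_const (by simp only [hMdef]; linarith)
    obtain ⟨δ, hδ, hball⟩ := Metric.mem_nhdsWithin_iff.mp hev
    set t₁ := min (t₀ + δ/2) T with ht₁def
    have ht₀t₁ : t₀ < t₁ := lt_min (by linarith) hlt'
    have ht₁mem : t₁ ∈ Icc 0 T := ⟨le_trans ht₀mem.1 ht₀t₁.le, min_le_right _ _⟩
    have hMt₁ : ∀ s ∈ Icc 0 t₁, E s ≤ M := by
      intro s hs
      rcases le_or_gt s t₀ with h | h
      · rcases lt_or_eq_of_le h with h' | h'
        · exact (hlt s hs.1 h').trans (by simp only [hMdef]; linarith)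
        · rw [h']; exact hEt₀.trans (by simp only [hMdef]; linarith)
      · have hsT : s ≤ T := hs.2.trans ht₁mem.2
        have hsball : s ∈ Metric.ball t₀ δ := by
          rw [Metric.mem_ball, Real.dist_eq, abs_of_pos (by linarith)]
          have : s ≤ t₀ + δ/2 := hs.2.trans (min_le_left _ _)
          linarith
        exact (hball ⟨hsball, hs.1, hsT⟩).le
    have ht₁S : t₁ ∈ S := ⟨ht₁mem, hgron t₁ ht₁mem hMt₁⟩
    exact absurd (le_csSup hSbdd ht₁S) (not_le.mpr ht₀t₁)
  intro t ht
  have : E t ≤ B := ht₀S.2 t ⟨ht.1, ht.2.trans_eq ht₀T.symm⟩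
  simp only [hMdef]; linarith
end

section
/- (Bound on the Lagrange multiplier.) Let Ω ⊂ ℝ² be a bounded open set of positive Lebesgue measure |Ω|, let ε > 0, let ρ : closure(Ω) → ℝ be continuously differentiable with −1/2 ≤ ρ(x) ≤ 3/2 for all x, and let P : closure(Ω) → ℝ² be continuous. Define λ := (1/|Ω|) ∫_Ω (W'(ρ(x))/ε² + P(x)·∇ρ(x)) dx. Then |λ| ≤ (√6 / (|Ω|^{1/2} ε²)) (∫_Ω W(ρ(x)) dx)^{1/2} + (1/|Ω|) (∫_Ω |∇ρ(x)|² dx)^{1/2} (∫_Ω |P(x)|² dx)^{1/2}. -/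
open Real MeasureTheory Set Topology ENNReal

lemma fderiv_bound_aux {E G : Type*} [NormedAddCommGroup E] [NormedSpace ℝ E]
    [NormedAddCommGroup G] [NormedSpace ℝ G]
    (Ω : Set E) (hΩo : IsOpen Ω) (hS : IsCompact (closure Ω))
    (ρ : E → G) (hρ : ContDiffOn ℝ 1 ρ (closure Ω)) :
    ∃ M : ℝ, 0 ≤ M ∧ ∀ y ∈ Ω, ‖fderiv ℝ ρ y‖ ≤ M := by
  have key : ∀ x ∈ closure Ω, ∃ (C : ℝ) (U : Set E), IsOpen U ∧ x ∈ U ∧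
      ∀ y ∈ Ω ∩ U, ‖fderiv ℝ ρ y‖ ≤ C := by
    intro x hx
    have h1 : ContDiffWithinAt ℝ (0 + 1) ρ (closure Ω) x := hρ x hx
    rw [contDiffWithinAt_succ_iff_hasFDerivWithinAt (by simp)] at h1
    obtain ⟨u, hu, -, f', hf'd, hf'c⟩ := h1
    rw [insert_eq_self.mpr hx] at hu
    rw [mem_nhdsWithin] at hu
    obtain ⟨v, hv_open, hxv, hvu⟩ := hu
    have hxu : x ∈ u := hvu ⟨hxv, hx⟩
    have hcw : ContinuousWithinAt f' u x := hf'c.continuousWithinAt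
    have hball : {y | ‖f' y - f' x‖ < 1} ∈ 𝓝[u] x := by
      have : Metric.ball (f' x) 1 ∈ 𝓝 (f' x) := Metric.ball_mem_nhds _ one_pos
      have := hcw this
      filter_upwards [this] with y hy
      simpa [Metric.mem_ball, dist_eq_norm] using hy
    rw [mem_nhdsWithin] at hball
    obtain ⟨t, ht_open, hxt, htb⟩ := hball
    refine ⟨‖f' x‖ + 1, v ∩ t, hv_open.inter ht_open, ⟨hxv, hxt⟩, ?_⟩
    rintro y ⟨hyΩ, hyv, hyt⟩
    have hyu : y ∈ u := hvu ⟨hyv, subset_closure hyΩ⟩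
    have hdy : HasFDerivWithinAt ρ (f' y) u y := hf'd y hyu
    have hmono : HasFDerivWithinAt ρ (f' y) (Ω ∩ v) y :=
      hdy.mono (fun z hz => hvu ⟨hz.2, subset_closure hz.1⟩)
    have hat : HasFDerivAt ρ (f' y) y :=
      hmono.hasFDerivAt ((hΩo.inter hv_open).mem_nhds ⟨hyΩ, hyv⟩)
    rw [hat.fderiv]
    have h2 : ‖f' y - f' x‖ < 1 := htb ⟨hyt, hyu⟩
    have h3 : ‖f' y‖ - ‖f' x‖ ≤ ‖f' y - f' x‖ := norm_sub_norm_le _ _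
    linarith
  choose C U hUo hxU hUb using key
  obtain ⟨s, hsub⟩ := hS.elim_nhds_subcover' (fun x hx => U x hx)
    (fun x hx => (hUo x hx).mem_nhds (hxU x hx))
  refine ⟨∑ x ∈ s, |C x.1 x.2|, Finset.sum_nonneg (fun i _ => abs_nonneg _), ?_⟩
  intro y hy
  obtain ⟨x, hxs, hyU⟩ := Set.mem_iUnion₂.mp (hsub (subset_closure hy))
  calc ‖fderiv ℝ ρ y‖ ≤ C x.1 x.2 := hUb x.1 x.2 y ⟨hy, hyU⟩
    _ ≤ |C x.1 x.2| := le_abs_self _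
    _ ≤ ∑ x ∈ s, |C x.1 x.2| := Finset.single_le_sum (f := fun x : closure Ω => |C x.1 x.2|) (fun i _ => abs_nonneg _) hxs

set_option maxHeartbeats 1600000 in
/-- Bound on the Lagrange multiplier enforcing mass conservation.
`W(ρ) = (1/4)ρ²(1-ρ)²`, `W'(ρ) = (1/2)ρ(1-ρ)(1-2ρ)`, and `gradient ρ x` is the
spatial gradient of the phase field. -/
theorem lagrange_multiplier_bound
    (Ω : Set (EuclideanSpace ℝ (Fin 2))) (hΩo : IsOpen Ω) (hΩb : Bornology.IsBounded Ω)
    (hΩm : 0 < (volume Ω).toReal)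
    (ε : ℝ) (hε : 0 < ε)
    (ρ : EuclideanSpace ℝ (Fin 2) → ℝ) (hρ : ContDiffOn ℝ 1 ρ (closure Ω))
    (hρb : ∀ x ∈ closure Ω, -(1/2) ≤ ρ x ∧ ρ x ≤ 3/2)
    (P : EuclideanSpace ℝ (Fin 2) → EuclideanSpace ℝ (Fin 2))
    (hP : ContinuousOn P (closure Ω)) :
    |(volume Ω).toReal⁻¹ *
        ∫ x in Ω, (((1/2) * ρ x * (1 - ρ x) * (1 - 2 * ρ x)) / ε^2
          + @inner ℝ _ _ (P x) (gradient ρ x))| ≤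
      Real.sqrt 6 / (Real.sqrt (volume Ω).toReal * ε^2) *
          Real.sqrt (∫ x in Ω, (1/4) * (ρ x)^2 * (1 - ρ x)^2)
        + (volume Ω).toReal⁻¹ * Real.sqrt (∫ x in Ω, ‖gradient ρ x‖^2) *
            Real.sqrt (∫ x in Ω, ‖P x‖^2) := by
  have hε2 : (0:ℝ) < ε^2 := pow_pos hε 2
  have hS : IsCompact (closure Ω) :=
    Metric.isCompact_of_isClosed_isBounded isClosed_closure hΩb.closure
  -- bound for the gradient
  obtain ⟨M, hM0, hM⟩ := fderiv_bound_aux Ω hΩo hS ρ hρ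
  have hgradnorm : ∀ y, ‖gradient ρ y‖ = ‖fderiv ℝ ρ y‖ := fun y =>
    (InnerProductSpace.toDual ℝ _).symm.norm_map _
  have hMg : ∀ y ∈ Ω, ‖gradient ρ y‖ ≤ M := fun y hy => (hgradnorm y) ▸ hM y hy
  -- bound for P
  obtain ⟨K, hK⟩ := hS.exists_bound_of_continuousOn hP
  have hKΩ : ∀ y ∈ Ω, ‖P y‖ ≤ K := fun y hy => hK y (subset_closure hy)
  -- finite measure
  haveI : Fact (volume Ω < ⊤) := Fact.mk hΩb.measure_lt_top
  set μ := volume.restrict Ω with hμ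
  haveI : IsFiniteMeasure μ := by
    rw [hμ]; exact MeasureTheory.Restrict.isFiniteMeasure _
  set V := (volume Ω).toReal with hV
  -- the two functions
  set a : EuclideanSpace ℝ (Fin 2) → ℝ :=
    fun x => ((1/2) * ρ x * (1 - ρ x) * (1 - 2 * ρ x)) / ε^2 with ha
  set b : EuclideanSpace ℝ (Fin 2) → ℝ :=
    fun x => @inner ℝ _ _ (P x) (gradient ρ x) with hb
  -- continuity facts
  have hρcΩ : ContinuousOn ρ Ω := hρ.continuousOn.mono subset_closure
  have hfc : ContinuousOn (fderiv ℝ ρ) Ω :=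
    (hρ.mono subset_closure).continuousOn_fderiv_of_isOpen hΩo le_rfl
  have hgc : ContinuousOn (gradient ρ) Ω :=
    (InnerProductSpace.toDual ℝ _).symm.continuous.comp_continuousOn hfc
  have hPcΩ : ContinuousOn P Ω := hP.mono subset_closure
  have hac : ContinuousOn a Ω := by
    apply ContinuousOn.div_const
    exact ((continuousOn_const.mul hρcΩ).mul (continuousOn_const.sub hρcΩ)).mul
      (continuousOn_const.sub (continuousOn_const.mul hρcΩ))
  have hbc : ContinuousOn b Ω := hPcΩ.inner hgc
  -- measurability
  have ham : AEStronglyMeasurable a μ := hac.aestronglyMeasurable hΩo.measurableSet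
  have hbm : AEStronglyMeasurable b μ := hbc.aestronglyMeasurable hΩo.measurableSet
  have hgm : AEStronglyMeasurable (gradient ρ) μ := hgc.aestronglyMeasurable hΩo.measurableSet
  have hPm : AEStronglyMeasurable P μ := hPcΩ.aestronglyMeasurable hΩo.measurableSet
  -- pointwise bounds
  have haB : ∀ x ∈ Ω, |a x| ≤ (9/4) / ε^2 := by
    intro x hx
    obtain ⟨h1, h2⟩ := hρb x (subset_closure hx)
    rw [ha, abs_div, abs_of_pos hε2]
    gcongr
    rw [abs_le]
    constructor <;> nlinarith [sq_nonneg (ρ x), sq_nonneg (1 - ρ x), sq_nonneg (1 - 2*ρ x),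
      mul_nonneg (by linarith : (0:ℝ) ≤ 1 + 2*ρ x) (by linarith : (0:ℝ) ≤ 3 - 2*ρ x)]
  have hbB : ∀ x ∈ Ω, |b x| ≤ K * M := by
    intro x hx
    calc |b x| ≤ ‖P x‖ * ‖gradient ρ x‖ := abs_real_inner_le_norm _ _
      _ ≤ K * M := mul_le_mul (hKΩ x hx) (hMg x hx) (norm_nonneg _)
          ((norm_nonneg (P x)).trans (hKΩ x hx))
  -- MemLp facts
  have hconj : Real.HolderConjugate 2 2 := Real.HolderConjugate.two_two
  have h2e : (ENNReal.ofReal 2) = 2 := by norm_num [ENNReal.ofReal_ofNat]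
  have hMemA : MemLp a (ENNReal.ofReal 2) μ := by
    apply MemLp.of_bound ham ((9/4) / ε^2)
    rw [hμ, ae_restrict_iff' hΩo.measurableSet]
    exact ae_of_all _ fun x hx => by simpa [Real.norm_eq_abs] using haB x hx
  have hMem1 : MemLp (fun _ : EuclideanSpace ℝ (Fin 2) => (1:ℝ)) (ENNReal.ofReal 2) μ :=
    memLp_const 1
  have hMemG : MemLp (gradient ρ) (ENNReal.ofReal 2) μ := by
    apply MemLp.of_bound hgm M
    rw [hμ, ae_restrict_iff' hΩo.measurableSet]
    exact ae_of_all _ fun x hx => hMg x hx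
  have hMemP : MemLp P (ENNReal.ofReal 2) μ := by
    apply MemLp.of_bound hPm K
    rw [hμ, ae_restrict_iff' hΩo.measurableSet]
    exact ae_of_all _ fun x hx => hKΩ x hx
  have h12 : (1:ℝ≥0∞) ≤ ENNReal.ofReal 2 := by rw [h2e]; exact one_le_two
  have haI : Integrable a μ := hMemA.integrable h12
  have hbI : Integrable b μ := by
    apply Integrable.mono' (integrable_const (K*M)) hbm
    rw [hμ, ae_restrict_iff' hΩo.measurableSet]
    exact ae_of_all _ fun x hx => by simpa [Real.norm_eq_abs] using hbB x hx
  -- square-integral comparison facts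
  have rpow2 : ∀ r : ℝ, r ^ (2:ℝ) = r ^ 2 := fun r => by
    rw [show (2:ℝ) = ((2:ℕ):ℝ) by norm_num, Real.rpow_natCast]
  have hVuniv : ∫ x, (1:ℝ) ∂μ = V := by
    simp [hμ, hV, Measure.restrict_apply_univ]; rfl
  -- Cauchy-Schwarz for a against 1
  have hcs1 : ∫ x, |a x| ∂μ ≤ Real.sqrt (∫ x, (a x)^2 ∂μ) * Real.sqrt V := by
    have h := integral_mul_norm_le_Lp_mul_Lq hconj hMemA hMem1
    simp only [norm_one, mul_one, Real.norm_eq_abs, rpow2, abs_one, one_pow, sq_abs,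
      hVuniv] at h
    calc ∫ x, |a x| ∂μ ≤ (∫ x, (a x)^2 ∂μ) ^ (1/(2:ℝ)) * V ^ (1/(2:ℝ)) := h
      _ = Real.sqrt (∫ x, (a x)^2 ∂μ) * Real.sqrt V := by
          rw [Real.sqrt_eq_rpow, Real.sqrt_eq_rpow]
  -- pointwise comparison of a² with W
  have hIa2 : ∫ x, (a x)^2 ∂μ ≤ 6/ε^4 * ∫ x, (1/4) * (ρ x)^2 * (1 - ρ x)^2 ∂μ := by
    have hWI : Integrable (fun x => (1/4) * (ρ x)^2 * (1 - ρ x)^2) μ := by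
      apply Integrable.mono' (integrable_const (81/64 : ℝ))
      · exact (((continuousOn_const.mul (hρcΩ.pow 2)).mul
          ((continuousOn_const.sub hρcΩ).pow 2))).aestronglyMeasurable hΩo.measurableSet
      · rw [hμ, ae_restrict_iff' hΩo.measurableSet]
        refine ae_of_all _ fun x hx => ?_
        obtain ⟨h1, h2⟩ := hρb x (subset_closure hx)
        have h3 : ρ x^2 ≤ 9/4 := by nlinarith
        have h4 : (1 - ρ x)^2 ≤ 9/4 := by nlinarith
        have h5 : ρ x^2 * (1 - ρ x)^2 ≤ 9/4 * (9/4) :=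
          mul_le_mul h3 h4 (sq_nonneg _) (by norm_num)
        rw [Real.norm_eq_abs, abs_le]
        constructor <;> nlinarith [mul_nonneg (sq_nonneg (ρ x)) (sq_nonneg (1 - ρ x))]
    have haI2 : Integrable (fun x => (a x)^2) μ := by
      have : MemLp a 2 μ := by rwa [h2e] at hMemA
      simpa [pow_two] using this.integrable_sq
    rw [← integral_const_mul]
    refine setIntegral_mono_on haI2 (hWI.const_mul _) hΩo.measurableSet fun x hx => ?_
    obtain ⟨h1, h2⟩ := hρb x (subset_closure hx)
    have hnum : ((1/2) * ρ x * (1 - ρ x) * (1 - 2 * ρ x))^2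
        ≤ 6 * ((1/4) * (ρ x)^2 * (1 - ρ x)^2) := by
      nlinarith [mul_nonneg (sq_nonneg (ρ x * (1 - ρ x)))
        (mul_nonneg (by linarith : (0:ℝ) ≤ 1 + 2*ρ x) (by linarith : (0:ℝ) ≤ 3 - 2*ρ x)),
        sq_nonneg (ρ x * (1 - ρ x))]
    have : (a x)^2 = ((1/2) * ρ x * (1 - ρ x) * (1 - 2 * ρ x))^2 / ε^4 := by
      simp only [ha]
      rw [div_pow, ← pow_mul]
    rw [this]
    rw [div_le_iff₀ (by positivity : (0:ℝ) < ε^4)]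
    calc ((1/2) * ρ x * (1 - ρ x) * (1 - 2 * ρ x))^2
        ≤ 6 * ((1/4) * (ρ x)^2 * (1 - ρ x)^2) := hnum
      _ = 6/ε^4 * ((1/4) * (ρ x)^2 * (1 - ρ x)^2) * ε^4 := by field_simp
  have hIW0 : 0 ≤ ∫ x, (1/4) * (ρ x)^2 * (1 - ρ x)^2 ∂μ := by
    exact integral_nonneg fun x =>
      mul_nonneg (mul_nonneg (by norm_num) (sq_nonneg _)) (sq_nonneg _)
  have hIa20 : 0 ≤ ∫ x, (a x)^2 ∂μ := integral_nonneg fun x => sq_nonneg _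
  have hsqrt64 : Real.sqrt (6/ε^4) = Real.sqrt 6 / ε^2 := by
    rw [show (6:ℝ)/ε^4 = 6/(ε^2)^2 by ring, Real.sqrt_div (by norm_num : (0:ℝ) ≤ 6),
      Real.sqrt_sq (le_of_lt hε2)]
  have hVV : Real.sqrt V * Real.sqrt V = V := Real.mul_self_sqrt hΩm.le
  have hsV : 0 < Real.sqrt V := Real.sqrt_pos.mpr hΩm
  have h1 : V⁻¹ * ∫ x, |a x| ∂μ ≤
      Real.sqrt 6 / (Real.sqrt V * ε^2) *
        Real.sqrt (∫ x, (1/4) * (ρ x)^2 * (1 - ρ x)^2 ∂μ) := by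
    have hstep : ∫ x, |a x| ∂μ ≤
        (Real.sqrt 6 / ε^2 * Real.sqrt (∫ x, (1/4) * (ρ x)^2 * (1 - ρ x)^2 ∂μ))
          * Real.sqrt V := by
      refine hcs1.trans (mul_le_mul_of_nonneg_right ?_ (Real.sqrt_nonneg _))
      rw [← hsqrt64, ← Real.sqrt_mul (by positivity)]
      exact Real.sqrt_le_sqrt hIa2
    calc V⁻¹ * ∫ x, |a x| ∂μ
        ≤ V⁻¹ * ((Real.sqrt 6 / ε^2 *
            Real.sqrt (∫ x, (1/4) * (ρ x)^2 * (1 - ρ x)^2 ∂μ)) * Real.sqrt V) :=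
          mul_le_mul_of_nonneg_left hstep (inv_nonneg.mpr hΩm.le)
      _ = Real.sqrt 6 / (Real.sqrt V * ε^2) *
            Real.sqrt (∫ x, (1/4) * (ρ x)^2 * (1 - ρ x)^2 ∂μ) := by
          set s := Real.sqrt (∫ x, (1/4) * (ρ x)^2 * (1 - ρ x)^2 ∂μ) with hs
          nth_rewrite 1 [← hVV]
          field_simp
  -- Cauchy-Schwarz for the inner product term
  have hcs2 : ∫ x, |b x| ∂μ ≤
      Real.sqrt (∫ x, ‖gradient ρ x‖^2 ∂μ) * Real.sqrt (∫ x, ‖P x‖^2 ∂μ) := by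
    have hprodI : Integrable (fun x => ‖gradient ρ x‖ * ‖P x‖) μ := by
      apply Integrable.mono' (integrable_const (M*K))
      · exact (hgc.norm.mul hPcΩ.norm).aestronglyMeasurable hΩo.measurableSet
      · rw [hμ, ae_restrict_iff' hΩo.measurableSet]
        refine ae_of_all _ fun x hx => ?_
        rw [Real.norm_eq_abs, abs_of_nonneg (by positivity)]
        exact mul_le_mul (hMg x hx) (hKΩ x hx) (norm_nonneg _) hM0
    have hb2 : ∫ x, |b x| ∂μ ≤ ∫ x, ‖gradient ρ x‖ * ‖P x‖ ∂μ := by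
      refine setIntegral_mono_on hbI.abs hprodI hΩo.measurableSet fun x hx => ?_
      rw [hb, mul_comm]
      exact abs_real_inner_le_norm _ _
    have h := integral_mul_norm_le_Lp_mul_Lq hconj hMemG hMemP
    simp only [norm_norm, rpow2] at h
    refine hb2.trans (h.trans ?_)
    rw [Real.sqrt_eq_rpow, Real.sqrt_eq_rpow]
  have h2 : V⁻¹ * ∫ x, |b x| ∂μ ≤
      V⁻¹ * Real.sqrt (∫ x, ‖gradient ρ x‖^2 ∂μ) * Real.sqrt (∫ x, ‖P x‖^2 ∂μ) := by
    rw [mul_assoc]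
    exact mul_le_mul_of_nonneg_left hcs2 (inv_nonneg.mpr hΩm.le)
  -- assemble
  have habsI : |∫ x, (a x + b x) ∂μ| ≤ (∫ x, |a x| ∂μ) + ∫ x, |b x| ∂μ := by
    calc |∫ x, (a x + b x) ∂μ| ≤ ∫ x, |a x + b x| ∂μ := by
          simpa [Real.norm_eq_abs] using
            norm_integral_le_integral_norm (μ := μ) (fun x => a x + b x)
      _ ≤ ∫ x, (|a x| + |b x|) ∂μ :=
        integral_mono (haI.add hbI).abs (haI.abs.add hbI.abs) fun x => abs_add_le _ _
      _ = _ := integral_add haI.abs hbI.abs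
  have main : |V⁻¹ * ∫ x, (a x + b x) ∂μ| ≤
      Real.sqrt 6 / (Real.sqrt V * ε^2) *
        Real.sqrt (∫ x, (1/4) * (ρ x)^2 * (1 - ρ x)^2 ∂μ)
      + V⁻¹ * Real.sqrt (∫ x, ‖gradient ρ x‖^2 ∂μ) * Real.sqrt (∫ x, ‖P x‖^2 ∂μ) := by
    calc |V⁻¹ * ∫ x, (a x + b x) ∂μ| = V⁻¹ * |∫ x, (a x + b x) ∂μ| := by
          rw [abs_mul, abs_of_nonneg (inv_nonneg.mpr hΩm.le)]
      _ ≤ V⁻¹ * ((∫ x, |a x| ∂μ) + ∫ x, |b x| ∂μ) :=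
          mul_le_mul_of_nonneg_left habsI (inv_nonneg.mpr hΩm.le)
      _ = V⁻¹ * ∫ x, |a x| ∂μ + V⁻¹ * ∫ x, |b x| ∂μ := by ring
      _ ≤ _ := add_le_add h1 h2
  exact main
end

section
/- (Weighted Dirichlet-form identity.) Let θ₀(y) = (1/2)(1 − tanh(y/(2√2))) and W(ρ) = (1/4)ρ²(1−ρ)². Then for every continuously differentiable function v : ℝ → ℝ such that v and v' are bounded, one has ∫_ℝ ((θ₀'(y) v(y))')² dy = ∫_ℝ (θ₀'(y))² (v'(y))² dy − ∫_ℝ W''(θ₀(y)) (θ₀'(y))² v(y)² dy. -/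
open Real MeasureTheory
open Set Filter Topology

noncomputable def W (ρ : ℝ) : ℝ := (1/4) * ρ^2 * (1 - ρ)^2
noncomputable def theta0 (y : ℝ) : ℝ := (1/2) * (1 - Real.tanh (y / (2 * Real.sqrt 2)))

noncomputable def qq (y : ℝ) : ℝ := Real.tanh (y / (2 * Real.sqrt 2))
noncomputable def phi0 (y : ℝ) : ℝ := -(1 - qq y ^ 2) / (2 * (2 * Real.sqrt 2))
noncomputable def phi1 (y : ℝ) : ℝ := qq y * (1 - qq y ^ 2) / 8
noncomputable def phi2 (y : ℝ) : ℝ :=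
  (1 - qq y ^ 2) * (1 - 3 * qq y ^ 2) / (8 * (2 * Real.sqrt 2))

lemma c_pos : (0:ℝ) < 2 * Real.sqrt 2 := by positivity

lemma s2 : Real.sqrt 2 ^ 2 = 2 :=
  Real.sq_sqrt (by norm_num)

lemma tanh_hasDerivAt (x : ℝ) : HasDerivAt Real.tanh (1 - Real.tanh x ^ 2) x := by
  have hc : Real.cosh x ≠ 0 := (Real.cosh_pos x).ne'
  have h : HasDerivAt (fun y => Real.sinh y / Real.cosh y)
      ((Real.cosh x * Real.cosh x - Real.sinh x * Real.sinh x) / Real.cosh x ^ 2) x :=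
    (Real.hasDerivAt_sinh x).div (Real.hasDerivAt_cosh x) hc
  have heq : (Real.cosh x * Real.cosh x - Real.sinh x * Real.sinh x) / Real.cosh x ^ 2
      = 1 - Real.tanh x ^ 2 := by
    rw [Real.tanh_eq_sinh_div_cosh, div_pow]
    field_simp
  have hfun : Real.tanh = fun y => Real.sinh y / Real.cosh y :=
    funext fun y => Real.tanh_eq_sinh_div_cosh y
  rw [← heq, hfun] at *
  exact h

lemma qq_hasDerivAt (y : ℝ) :
    HasDerivAt qq ((1 - qq y ^ 2) / (2 * Real.sqrt 2)) y := by
  have h1 : HasDerivAt (fun z : ℝ => z / (2 * Real.sqrt 2)) (1 / (2 * Real.sqrt 2)) y :=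
    (hasDerivAt_id y).div_const _
  have h := (tanh_hasDerivAt (y / (2 * Real.sqrt 2))).comp y h1
  have : (1 - Real.tanh (y / (2 * Real.sqrt 2)) ^ 2) * (1 / (2 * Real.sqrt 2))
      = (1 - qq y ^ 2) / (2 * Real.sqrt 2) := by rw [qq]; ring
  rw [this] at h
  exact h

lemma phi0_hasDerivAt (y : ℝ) : HasDerivAt phi0 (phi1 y) y := by
  have h4 := (((qq_hasDerivAt y).pow 2).const_sub 1).div_const (2 * (2 * Real.sqrt 2)) |>.neg
  have heq : -(-(↑(2:ℕ) * qq y ^ (2-1) * ((1 - qq y ^ 2) / (2 * Real.sqrt 2))) / (2 * (2 * Real.sqrt 2)))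
      = phi1 y := by
    rw [phi1]
    have h0 : (2 * Real.sqrt 2) ≠ 0 := c_pos.ne'
    field_simp
    linear_combination (qq y ^ 3 * 8 - qq y * 8) * s2
  rw [heq] at h4
  have hfun : phi0 = fun x => -((1 - qq x ^ 2) / (2 * (2 * Real.sqrt 2))) := by
    funext x; rw [phi0]; ring
  rw [hfun]; exact h4

lemma phi1_hasDerivAt (y : ℝ) : HasDerivAt phi1 (phi2 y) y := by
  have h := ((qq_hasDerivAt y).mul (((qq_hasDerivAt y).pow 2).const_sub 1)).div_const 8
  have heq : ((1 - qq y ^ 2) / (2 * Real.sqrt 2) * (1 - qq y ^ 2) +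
      qq y * -(↑(2:ℕ) * qq y ^ (2-1) * ((1 - qq y ^ 2) / (2 * Real.sqrt 2)))) / 8
      = phi2 y := by
    rw [phi2]
    have h0 : (2 * Real.sqrt 2) ≠ 0 := c_pos.ne'
    field_simp
    ring
  rw [← heq]
  exact h

lemma theta0_hasDerivAt (y : ℝ) : HasDerivAt theta0 (phi0 y) y := by
  have h := ((qq_hasDerivAt y).const_sub 1).const_mul (1/2 : ℝ)
  have heq : (1/2 : ℝ) * -((1 - qq y ^ 2) / (2 * Real.sqrt 2)) = phi0 y := by
    rw [phi0]; ring
  rw [heq] at h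
  exact h

lemma deriv_theta0 : deriv theta0 = phi0 :=
  funext fun y => (theta0_hasDerivAt y).deriv

lemma derivW : deriv W = fun ρ => ρ^3 - (3/2)*ρ^2 + (1/2)*ρ := by
  funext ρ
  have h3 : HasDerivAt (fun x:ℝ => (1/4) * x^2) ((1/4) * (↑(2:ℕ) * ρ^(2-1))) ρ :=
    (hasDerivAt_pow 2 ρ).const_mul (1/4)
  have h2 : HasDerivAt (fun x:ℝ => (1-x)^2) (↑(2:ℕ) * (1-ρ)^(2-1) * (-1)) ρ :=
    ((hasDerivAt_id ρ).const_sub 1).pow 2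
  have h4 := h3.mul h2
  have h5 : HasDerivAt W ((1/4) * (↑(2:ℕ) * ρ^(2-1)) * (1-ρ)^2 +
      (1/4) * ρ^2 * (↑(2:ℕ) * (1-ρ)^(2-1) * (-1))) ρ := h4
  rw [h5.deriv]; push_cast; ring

lemma derivderivW (ρ : ℝ) : deriv (deriv W) ρ = 3*ρ^2 - 3*ρ + 1/2 := by
  rw [derivW]
  have h : HasDerivAt (fun x:ℝ => x^3 - (3/2)*x^2 + (1/2)*x) (3*ρ^2 - 3*ρ + 1/2) ρ := by
    have h1 := ((hasDerivAt_pow 3 ρ).sub ((hasDerivAt_pow 2 ρ).const_mul (3/2))).add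
      ((hasDerivAt_id ρ).const_mul (1/2))
    exact h1.congr_deriv (by push_cast; ring)
  exact h.deriv

lemma key_identity (y : ℝ) : deriv (deriv W) (theta0 y) * phi0 y = phi2 y := by
  rw [derivderivW]
  have ht : theta0 y = (1/2) * (1 - qq y) := rfl
  rw [ht, phi0, phi2]
  have h0 : (2*Real.sqrt 2) ≠ 0 := c_pos.ne'
  field_simp
  ring

lemma one_sub_tanh_sq (x : ℝ) : 1 - Real.tanh x ^ 2 = 1 / Real.cosh x ^ 2 := by
  rw [Real.tanh_eq_sinh_div_cosh, div_pow]
  have hc : Real.cosh x ^ 2 ≠ 0 := by positivity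
  field_simp
  exact Real.cosh_sq_sub_sinh_sq x

lemma S_pos (y : ℝ) : 0 < 1 - qq y ^ 2 := by
  rw [qq, one_sub_tanh_sq]; positivity

lemma S_le_one (y : ℝ) : 1 - qq y ^ 2 ≤ 1 := by nlinarith [sq_nonneg (qq y)]

lemma qq_abs_le (y : ℝ) : |qq y| ≤ 1 := by
  nlinarith [S_pos y, sq_abs (qq y), abs_nonneg (qq y)]

lemma exp_half_abs_le_cosh (x : ℝ) : Real.exp |x| / 2 ≤ Real.cosh x := by
  rw [Real.cosh_eq]
  rcases abs_cases x with ⟨h, _⟩ | ⟨h, _⟩ <;> rw [h] <;>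
    nlinarith [Real.exp_pos x, Real.exp_pos (-x)]

lemma sqrt2_le_two : Real.sqrt 2 ≤ 2 := by
  nlinarith [s2, Real.sqrt_nonneg 2]

lemma one_le_sqrt2 : 1 ≤ Real.sqrt 2 := by
  nlinarith [s2, Real.sqrt_nonneg 2]

lemma S_bound (y : ℝ) : 1 - qq y ^ 2 ≤ 4 * Real.exp (-(1/2) * |y|) := by
  rw [qq, one_sub_tanh_sq]
  set u := y / (2 * Real.sqrt 2) with hu
  have h1 : Real.exp |u| / 2 ≤ Real.cosh u := exp_half_abs_le_cosh u
  have hepos : (0:ℝ) < Real.exp |u| := Real.exp_pos _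
  have h2 : Real.exp (2 * |u|) / 4 ≤ Real.cosh u ^ 2 := by
    have he : Real.exp (2 * |u|) = Real.exp |u| * Real.exp |u| := by
      rw [← Real.exp_add]; ring_nf
    nlinarith [Real.cosh_pos u]
  have h3 : 1 / Real.cosh u ^ 2 ≤ 4 * Real.exp (-(2 * |u|)) := by
    rw [Real.exp_neg, div_le_iff₀ (by positivity)]
    calc (1:ℝ) = 4 * (Real.exp (2*|u|))⁻¹ * (Real.exp (2*|u|)/4) := by
          field_simp
      _ ≤ 4 * (Real.exp (2*|u|))⁻¹ * Real.cosh u ^ 2 :=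
          mul_le_mul_of_nonneg_left h2 (by positivity)
      _ = 4 * (Real.exp (2*|u|))⁻¹ * Real.cosh u ^ 2 := rfl
  have habs : |u| = |y| / (2 * Real.sqrt 2) := by
    rw [hu, abs_div, abs_of_pos c_pos]
  have h5 : (1/2) * |y| ≤ 2 * |u| := by
    rw [habs]
    have he : 2 * (|y|/(2*Real.sqrt 2)) = |y| / Real.sqrt 2 := by
      field_simp
    rw [he, le_div_iff₀ (by positivity : (0:ℝ) < Real.sqrt 2)]
    nlinarith [abs_nonneg y, sqrt2_le_two]
  have h6 : Real.exp (-(2*|u|)) ≤ Real.exp (-(1/2)*|y|) := by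
    apply Real.exp_le_exp.mpr; linarith
  calc 1 / Real.cosh u ^ 2 ≤ 4 * Real.exp (-(2*|u|)) := h3
    _ ≤ 4 * Real.exp (-(1/2)*|y|) := by linarith

lemma continuous_qq : Continuous qq := by
  have h : Continuous Real.tanh :=
    (Differentiable.continuous fun x => (tanh_hasDerivAt x).differentiableAt)
  exact h.comp (continuous_id.div_const _)

lemma continuous_phi0 : Continuous phi0 :=
  Differentiable.continuous fun y => (phi0_hasDerivAt y).differentiableAt

lemma continuous_phi1 : Continuous phi1 :=
  Differentiable.continuous fun y => (phi1_hasDerivAt y).differentiableAt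

lemma continuous_phi2 : Continuous phi2 := by
  unfold phi2
  exact ((continuous_const.sub ((continuous_qq.pow 2))).mul
    (continuous_const.sub (continuous_const.mul (continuous_qq.pow 2)))).div_const _

lemma integrable_exp_half : Integrable (fun y : ℝ => Real.exp (-(1/2) * |y|)) := by
  have h1 : IntegrableOn (fun y : ℝ => Real.exp (-(1/2) * |y|)) (Ioi (0:ℝ)) := by
    refine (exp_neg_integrableOn_Ioi 0 (by norm_num : (0:ℝ) < 1/2)).congr_fun ?_
      measurableSet_Ioi
    intro x hx
    simp [abs_of_pos (show (0:ℝ) < x from hx)]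
  have h0 : IntegrableOn (fun y : ℝ => Real.exp (-(1/2) * |y|)) (Iio (0:ℝ)) := by
    have h2 := (MeasurePreserving.integrableOn_comp_preimage
      (Measure.measurePreserving_neg (volume : Measure ℝ))
      (Homeomorph.neg ℝ).measurableEmbedding).2 h1
    have he : ((fun y : ℝ => Real.exp (-(1/2) * |y|)) ∘ (Neg.neg : ℝ → ℝ))
        = fun y : ℝ => Real.exp (-(1/2) * |y|) := by
      funext y; simp [Function.comp, abs_neg]
    have hs : ((Neg.neg : ℝ → ℝ) ⁻¹' (Set.Ioi 0)) = Set.Iio 0 := by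
      ext x; simp
    rw [he, hs] at h2
    exact h2
  have h0' : IntegrableOn (fun y : ℝ => Real.exp (-(1/2) * |y|)) (Set.Iic (0:ℝ)) := by
    rwa [integrableOn_Iic_iff_integrableOn_Iio]
  rw [← MeasureTheory.integrableOn_univ, ← Set.Iic_union_Ioi (a := (0:ℝ))]
  exact h0'.union h1

lemma integrable_S : Integrable (fun y : ℝ => 1 - qq y ^ 2) := by
  refine (integrable_exp_half.const_mul 4).mono'
    ((continuous_const.sub (continuous_qq.pow 2)).aestronglyMeasurable) ?_
  filter_upwards with y
  rw [Real.norm_eq_abs, abs_of_pos (S_pos y)]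
  exact S_bound y

lemma tendsto_exp_half_top :
    Tendsto (fun y : ℝ => 4 * Real.exp (-(1/2) * |y|)) atTop (𝓝 0) := by
  have h1 : Tendsto (fun y : ℝ => -(1/2) * |y|) atTop atBot :=
    tendsto_abs_atTop_atTop.const_mul_atTop_of_neg (by norm_num)
  simpa using (Real.tendsto_exp_atBot.comp h1).const_mul 4

lemma tendsto_exp_half_bot :
    Tendsto (fun y : ℝ => 4 * Real.exp (-(1/2) * |y|)) atBot (𝓝 0) := by
  have h1 : Tendsto (fun y : ℝ => -(1/2) * |y|) atBot atBot :=
    tendsto_abs_atBot_atTop.const_mul_atTop_of_neg (by norm_num)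
  simpa using (Real.tendsto_exp_atBot.comp h1).const_mul 4

lemma phi0_bound (y : ℝ) : |phi0 y| ≤ 1 - qq y ^ 2 := by
  have h1 : |phi0 y| = (1 - qq y ^ 2) / (2*(2*Real.sqrt 2)) := by
    rw [phi0, abs_div, abs_neg, abs_of_pos (S_pos y), abs_of_pos (by positivity)]
  rw [h1]
  exact div_le_self (S_pos y).le (by nlinarith [one_le_sqrt2])

lemma phi1_bound (y : ℝ) : |phi1 y| ≤ 1 - qq y ^ 2 := by
  have h1 : |phi1 y| = |qq y| * (1 - qq y ^ 2) / 8 := by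
    rw [phi1, abs_div, abs_mul, abs_of_pos (S_pos y)]
    norm_num
  rw [h1]
  nlinarith [qq_abs_le y, S_pos y, abs_nonneg (qq y)]

lemma phi2_bound (y : ℝ) : |phi2 y| ≤ 1 - qq y ^ 2 := by
  have h1 : |phi2 y| = (1 - qq y ^ 2) * |1 - 3*qq y^2| / (8*(2*Real.sqrt 2)) := by
    rw [phi2, abs_div, abs_mul, abs_of_pos (S_pos y),
      abs_of_pos (show (0:ℝ) < 8*(2*Real.sqrt 2) by positivity)]
  rw [h1]
  have h2 : |1 - 3*qq y^2| ≤ 4 := by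
    rw [abs_le]
    constructor <;> nlinarith [sq_nonneg (qq y), S_pos y]
  rw [div_le_iff₀ (by positivity)]
  nlinarith [mul_le_mul_of_nonneg_left h2 (S_pos y).le, S_pos y, one_le_sqrt2]

/-- Weighted Dirichlet-form identity for the linearized Allen–Cahn operator. -/
theorem weighted_dirichlet_form_identity
    (v : ℝ → ℝ) (hv : ContDiff ℝ 1 v)
    (hvb : ∃ M : ℝ, ∀ y : ℝ, |v y| ≤ M ∧ |deriv v y| ≤ M) :
    ∫ y : ℝ, (deriv (fun z => deriv theta0 z * v z) y)^2 =
      (∫ y : ℝ, (deriv theta0 y)^2 * (deriv v y)^2)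
        - ∫ y : ℝ, deriv (deriv W) (theta0 y) * (deriv theta0 y)^2 * (v y)^2 := by
  obtain ⟨M, hM⟩ := hvb
  have hM0 : (0:ℝ) ≤ M := (abs_nonneg _).trans (hM 0).1
  have hvd : ∀ y, HasDerivAt v (deriv v y) y := fun y =>
    (hv.differentiable one_ne_zero y).hasDerivAt
  have cv : Continuous v := hv.continuous
  have cv' : Continuous (deriv v) := hv.continuous_deriv le_rfl
  have hprod : ∀ y, deriv (fun z => deriv theta0 z * v z) y
      = phi1 y * v y + phi0 y * deriv v y := by
    intro y
    rw [deriv_theta0]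
    exact ((phi0_hasDerivAt y).mul (hvd y)).deriv
  have hC : ∀ y : ℝ, deriv (deriv W) (theta0 y) * (deriv theta0 y)^2 * (v y)^2
      = phi2 y * phi0 y * (v y)^2 := by
    intro y
    rw [deriv_theta0, ← key_identity y]
    ring
  simp_rw [hprod, hC, deriv_theta0]
  -- common pointwise bounds
  have e1 : ∀ y, |phi1 y * v y| ≤ (1 - qq y ^ 2) * M := by
    intro y
    rw [abs_mul]
    exact mul_le_mul (phi1_bound y) (hM y).1 (abs_nonneg _) (S_pos y).le
  have e2 : ∀ y, |phi0 y * deriv v y| ≤ (1 - qq y ^ 2) * M := by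
    intro y
    rw [abs_mul]
    exact mul_le_mul (phi0_bound y) (hM y).2 (abs_nonneg _) (S_pos y).le
  have ev : ∀ y, |(v y)^2| ≤ M^2 := by
    intro y
    rw [abs_of_nonneg (sq_nonneg _), ← sq_abs]
    exact pow_le_pow_left₀ (abs_nonneg _) (hM y).1 2
  -- integrability of the three integrands
  have intA : Integrable (fun y : ℝ => (phi1 y * v y + phi0 y * deriv v y)^2) := by
    refine ((integrable_S.const_mul (4*M^2)).mono'
      (((((continuous_phi1.mul cv).add (continuous_phi0.mul cv')).pow 2)).aestronglyMeasurable) ?_)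
    filter_upwards with y
    have e3 : |phi1 y * v y + phi0 y * deriv v y| ≤ 2*((1 - qq y ^ 2) * M) :=
      (abs_add_le _ _).trans (by linarith [e1 y, e2 y])
    have e4 : (phi1 y * v y + phi0 y * deriv v y)^2 ≤ (2*((1 - qq y ^ 2)*M))^2 := by
      rw [← sq_abs]
      exact pow_le_pow_left₀ (abs_nonneg _) e3 2
    simp only [Real.norm_eq_abs]
    rw [abs_of_nonneg (sq_nonneg _)]
    nlinarith [sq_nonneg M, mul_nonneg (S_pos y).le hM0, S_le_one y, S_pos y]
  have intB : Integrable (fun y : ℝ => (phi0 y)^2 * (deriv v y)^2) := by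
    refine ((integrable_S.const_mul (M^2)).mono'
      (((continuous_phi0.pow 2).mul (cv'.pow 2)).aestronglyMeasurable) ?_)
    filter_upwards with y
    have e4 : (phi0 y * deriv v y)^2 ≤ ((1 - qq y ^ 2)*M)^2 := by
      rw [← sq_abs]
      exact pow_le_pow_left₀ (abs_nonneg _) (e2 y) 2
    simp only [Real.norm_eq_abs]
    have hh : (phi0 y)^2 * (deriv v y)^2 = (phi0 y * deriv v y)^2 := by ring
    rw [hh, abs_of_nonneg (sq_nonneg _)]
    nlinarith [sq_nonneg M, mul_nonneg (S_pos y).le hM0, S_le_one y, S_pos y]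
  have intC : Integrable (fun y : ℝ => phi2 y * phi0 y * (v y)^2) := by
    refine ((integrable_S.const_mul (M^2)).mono'
      (((continuous_phi2.mul continuous_phi0).mul (cv.pow 2)).aestronglyMeasurable) ?_)
    filter_upwards with y
    simp only [Real.norm_eq_abs]
    rw [abs_mul, abs_mul]
    calc |phi2 y| * |phi0 y| * |(v y)^2|
        ≤ ((1 - qq y ^ 2) * (1 - qq y ^ 2)) * M^2 :=
          mul_le_mul (mul_le_mul (phi2_bound y) (phi0_bound y) (abs_nonneg _) (S_pos y).le)
            (ev y) (abs_nonneg _) (mul_nonneg (S_pos y).le (S_pos y).le)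
      _ ≤ M^2 * (1 - qq y ^ 2) := by
          nlinarith [S_pos y, S_le_one y, sq_nonneg M,
            mul_nonneg (mul_nonneg (S_pos y).le
              (by linarith [S_le_one y] : (0:ℝ) ≤ 1 - (1 - qq y^2))) (sq_nonneg M)]
  -- derivative of the auxiliary function G
  have hGd : ∀ y : ℝ, HasDerivAt (fun z : ℝ => phi0 z * phi1 z * (v z)^2)
      ((phi1 y * v y + phi0 y * deriv v y)^2 - (phi0 y)^2 * (deriv v y)^2
        + phi2 y * phi0 y * (v y)^2) y := by
    intro y
    have h := ((phi0_hasDerivAt y).mul (phi1_hasDerivAt y)).mul ((hvd y).pow 2)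
    exact h.congr_deriv (by simp only [Pi.mul_apply, Pi.pow_apply]; push_cast; ring)
  -- G tends to zero at both infinities
  have hGb : ∀ y : ℝ, ‖phi0 y * phi1 y * (v y)^2‖ ≤ M^2 * (4 * Real.exp (-(1/2) * |y|)) := by
    intro y
    simp only [Real.norm_eq_abs]
    rw [abs_mul, abs_mul]
    have hSb := S_bound y
    calc |phi0 y| * |phi1 y| * |(v y)^2|
        ≤ ((1 - qq y ^ 2) * (1 - qq y ^ 2)) * M^2 :=
          mul_le_mul (mul_le_mul (phi0_bound y) (phi1_bound y) (abs_nonneg _) (S_pos y).le)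
            (ev y) (abs_nonneg _) (mul_nonneg (S_pos y).le (S_pos y).le)
      _ ≤ (1 - qq y ^ 2) * M^2 := by
          nlinarith [S_pos y, S_le_one y, sq_nonneg M,
            mul_nonneg (mul_nonneg (S_pos y).le
              (by linarith [S_le_one y] : (0:ℝ) ≤ 1 - (1 - qq y^2))) (sq_nonneg M)]
      _ ≤ M^2 * (4 * Real.exp (-(1/2) * |y|)) := by
          nlinarith [mul_le_mul_of_nonneg_right hSb (sq_nonneg M)]
  have hGtop : Tendsto (fun z : ℝ => phi0 z * phi1 z * (v z)^2) atTop (𝓝 0) :=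
    squeeze_zero_norm hGb (by simpa using tendsto_exp_half_top.const_mul (M^2))
  have hGbot : Tendsto (fun z : ℝ => phi0 z * phi1 z * (v z)^2) atBot (𝓝 0) :=
    squeeze_zero_norm hGb (by simpa using tendsto_exp_half_bot.const_mul (M^2))
  -- the integral of the derivative vanishes
  have hint : Integrable (fun y : ℝ => (phi1 y * v y + phi0 y * deriv v y)^2
      - (phi0 y)^2 * (deriv v y)^2 + phi2 y * phi0 y * (v y)^2) :=
    (intA.sub intB).add intC
  have h1 : ∫ y in Iic (0:ℝ), ((phi1 y * v y + phi0 y * deriv v y)^2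
      - (phi0 y)^2 * (deriv v y)^2 + phi2 y * phi0 y * (v y)^2)
      = phi0 0 * phi1 0 * (v 0)^2 - 0 :=
    integral_Iic_of_hasDerivAt_of_tendsto' (fun x _ => hGd x) hint.integrableOn hGbot
  have h2 : ∫ y in Ioi (0:ℝ), ((phi1 y * v y + phi0 y * deriv v y)^2
      - (phi0 y)^2 * (deriv v y)^2 + phi2 y * phi0 y * (v y)^2)
      = 0 - phi0 0 * phi1 0 * (v 0)^2 :=
    integral_Ioi_of_hasDerivAt_of_tendsto' (fun x _ => hGd x) hint.integrableOn hGtop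
  have h3 : ∫ y : ℝ, ((phi1 y * v y + phi0 y * deriv v y)^2
      - (phi0 y)^2 * (deriv v y)^2 + phi2 y * phi0 y * (v y)^2) = 0 := by
    rw [← intervalIntegral.integral_Iic_add_Ioi hint.integrableOn hint.integrableOn, h1, h2]
    ring
  have intAB : Integrable (fun y : ℝ => (phi1 y * v y + phi0 y * deriv v y)^2
      - (phi0 y)^2 * (deriv v y)^2) := intA.sub intB
  rw [integral_add intAB intC, integral_sub intA intB] at h3
  linarith
end
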